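/- arXiv:2507.19761 — 2 statements merged into one kernel-verified Lean document; each statement's English description precedes it below -/
import Mathlib

section
/- In the partial crossed product H_ss # H4, the element 1 # v equals k1(1#1) + k2(e1#1) + k3(e2#1) - k4(e3#1); i.e., a#v is a linear combination of elements b#1 for all a. -/
open Quaternion TensorProduct

noncomputable section

/-- Sweedler's Hopf algebra `H₄` as a vector space over `ℝ`,
with basis `1, g, ν, gν` indexed by `Fin 4`. -/
abbrev H4 := Fin 4 → ℝ

namespace H4

/-- The canonical basis `1, g, ν, gν` of Sweedler's Hopf algebra. -/
def B : Module.Basis (Fin 4) ℝ H4 := Pi.basisFun ℝ (Fin 4)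

/-- The unit `1` of `H₄`. -/
def u : H4 := B 0
/-- The grouplike element `g` of `H₄`. -/
def g : H4 := B 1
/-- The element `ν` of `H₄`. -/
def v : H4 := B 2
/-- The element `gν` of `H₄`. -/
def w : H4 := B 3

/-- The multiplication of Sweedler's Hopf algebra, as a bilinear map:
`g² = 1`, `ν² = 0`, `gν = -νg`. -/
def mul4 : H4 →ₗ[ℝ] H4 →ₗ[ℝ] H4 :=
  B.constr ℝ ![B.constr ℝ ![u, g, v, w],
               B.constr ℝ ![g, u, w, v],
               B.constr ℝ ![v, -w, 0, 0],
               B.constr ℝ ![w, -v, 0, 0]]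

/-- The comultiplication of Sweedler's Hopf algebra:
`Δ(1) = 1⊗1`, `Δ(g) = g⊗g`, `Δ(ν) = g⊗ν + ν⊗1`, `Δ(gν) = 1⊗gν + gν⊗g`. -/
def Δ : H4 →ₗ[ℝ] H4 ⊗[ℝ] H4 :=
  B.constr ℝ ![u ⊗ₜ u, g ⊗ₜ g, g ⊗ₜ v + v ⊗ₜ u, u ⊗ₜ w + w ⊗ₜ g]

end H4

/-- The split semi-quaternion algebra `H_ss`:
`e1² = 1`, `e2² = 0`, `e3² = 0`, `e1e2 = e3 = -e2e1`,
`e2e3 = 0 = -e3e2`, `e3e1 = -e2 = -e1e3`. -/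
abbrev Hss := ℍ[ℝ, 1, 0]

namespace Hss
def e1 : Hss := ⟨0, 1, 0, 0⟩
def e2 : Hss := ⟨0, 0, 1, 0⟩
def e3 : Hss := ⟨0, 0, 0, 1⟩
/-- The basis `1, e1, e2, e3` of the split semi-quaternion algebra. -/
def Qb : Module.Basis (Fin 4) ℝ Hss := QuaternionAlgebra.basisOneIJK 1 0 0
end Hss

variable (k1 k2 k3 k4 l1 l2 l3 l4 : ℝ)

/-- The value `ν · 1 = ω(1,ν) = ω(ν,1) = k₁ + k₂e₁ + k₃e₂ - k₄e₃`. -/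
def nu1 : Hss := k1 • 1 + k2 • Hss.e1 + k3 • Hss.e2 - k4 • Hss.e3

/-- The value `gν · 1 = ω(1,gν) = ω(gν,1) = l₁ + l₂e₁ + l₃e₂ + l₄e₃`. -/
def gnu1 : Hss := l1 • 1 + l2 • Hss.e1 + l3 • Hss.e2 + l4 • Hss.e3

/-- The partial action `· : H₄ ⊗ H_ss → H_ss` from the paper:
`1` acts as the identity, `g · x = 0`, and `ν`, `gν` act via the parameters
`k₁,…,k₄,l₁,…,l₄` as in the table. -/
def actSS : H4 →ₗ[ℝ] Hss →ₗ[ℝ] Hss :=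
  H4.B.constr ℝ
    ![LinearMap.id, 0,
      Hss.Qb.constr ℝ
        ![nu1 k1 k2 k3 k4,
          k2 • 1 + k1 • Hss.e1 + k4 • Hss.e2 - k3 • Hss.e3,
          k1 • Hss.e2 + k2 • Hss.e3,
          k2 • Hss.e2 + k1 • Hss.e3],
      Hss.Qb.constr ℝ
        ![gnu1 l1 l2 l3 l4,
          l2 • 1 + l1 • Hss.e1 + l4 • Hss.e2 + l3 • Hss.e3,
          l1 • Hss.e2 - l2 • Hss.e3,
          -l2 • Hss.e2 + l1 • Hss.e3]]

/-- The value `ω(ν,ν) = (k₁²+k₂²) + 2k₁k₂e₁ + 2k₁k₃e₂ - 2k₁k₄e₃`. -/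
def omvv : Hss :=
  (k1 ^ 2 + k2 ^ 2) • 1 + (2 * k1 * k2) • Hss.e1
    + (2 * k1 * k3) • Hss.e2 - (2 * k1 * k4) • Hss.e3

/-- The value `ω(ν,gν) = ω(gν,ν)`. -/
def omvw : Hss :=
  (k1 * l1 + k2 * l2) • 1 + (k2 * l1 + k1 * l2) • Hss.e1
    + (k3 * l1 + k4 * l2 + k1 * l3 + k2 * l4) • Hss.e2
    + (-(k4 * l1) - k3 * l2 + k2 * l3 + k1 * l4) • Hss.e3

/-- The cocycle `ω : H₄ ⊗ H₄ → H_ss` from the paper's table. -/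
def omSS : H4 →ₗ[ℝ] H4 →ₗ[ℝ] Hss :=
  H4.B.constr ℝ
    ![H4.B.constr ℝ ![1, 0, nu1 k1 k2 k3 k4, gnu1 l1 l2 l3 l4],
      0,
      H4.B.constr ℝ ![nu1 k1 k2 k3 k4, 0, omvv k1 k2 k3 k4,
        omvw k1 k2 k3 k4 l1 l2 l3 l4],
      H4.B.constr ℝ ![gnu1 l1 l2 l3 l4, 0,
        omvw k1 k2 k3 k4 l1 l2 l3 l4, 0]]

/-- The map `h ↦ (h₁·1) ⊗ h₂` of `H₄` into `H_ss ⊗ H₄`. -/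
def sharpAux : H4 →ₗ[ℝ] Hss ⊗[ℝ] H4 :=
  (TensorProduct.map ((actSS k1 k2 k3 k4 l1 l2 l3 l4).flip 1) LinearMap.id) ∘ₗ H4.Δ

/-- The bilinear map `(a, h) ↦ a ♯ h = a(h₁·1) ⊗ h₂` defining the elements of the
partial crossed product `H_ss ♯ H₄ = (H_ss ⊗ H₄)(1 ⊗ 1)`. -/
def sharpSS : Hss →ₗ[ℝ] H4 →ₗ[ℝ] Hss ⊗[ℝ] H4 :=
  ((LinearMap.llcomp ℝ H4 (Hss ⊗[ℝ] H4) (Hss ⊗[ℝ] H4)).flip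
      (sharpAux k1 k2 k3 k4 l1 l2 l3 l4)) ∘ₗ
    LinearMap.rTensorHom H4 ∘ₗ LinearMap.mul ℝ Hss


lemma actSS_v_one : (actSS k1 k2 k3 k4 l1 l2 l3 l4) (H4.B 2) 1 = nu1 k1 k2 k3 k4 := by
  have h1 : (1 : Hss) = Hss.Qb 0 := by
    ext <;> simp [Hss.Qb, QuaternionAlgebra.basisOneIJK, Module.Basis.ofEquivFun]
  rw [actSS, Module.Basis.constr_basis, h1]
  simp [Module.Basis.constr_basis]

lemma actSS_g_one : (actSS k1 k2 k3 k4 l1 l2 l3 l4) (H4.B 1) 1 = 0 := by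
  rw [actSS, Module.Basis.constr_basis]
  simp

lemma actSS_u : (actSS k1 k2 k3 k4 l1 l2 l3 l4) (H4.B 0) = LinearMap.id := by
  rw [actSS, Module.Basis.constr_basis]; rfl

lemma sharpAux_v : sharpAux k1 k2 k3 k4 l1 l2 l3 l4 H4.v = (nu1 k1 k2 k3 k4) ⊗ₜ H4.u := by
  rw [sharpAux]
  simp only [LinearMap.comp_apply, H4.Δ, H4.v, Module.Basis.constr_basis]
  simp [H4.g, H4.u, TensorProduct.map_tmul, LinearMap.flip_apply, actSS_g_one, actSS_v_one]

lemma sharpAux_u : sharpAux k1 k2 k3 k4 l1 l2 l3 l4 H4.u = (1 : Hss) ⊗ₜ H4.u := by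
  rw [sharpAux]
  simp only [LinearMap.comp_apply, H4.Δ, H4.u, Module.Basis.constr_basis]
  simp [TensorProduct.map_tmul, LinearMap.flip_apply, actSS_u]

lemma sharpSS_apply (a : Hss) (h : H4) :
    sharpSS k1 k2 k3 k4 l1 l2 l3 l4 a h
      = (LinearMap.rTensor H4 (LinearMap.mul ℝ Hss a)) (sharpAux k1 k2 k3 k4 l1 l2 l3 l4 h) := rfl

lemma sharpSS_v (a : Hss) :
    sharpSS k1 k2 k3 k4 l1 l2 l3 l4 a H4.v = (a * nu1 k1 k2 k3 k4) ⊗ₜ H4.u := by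
  rw [sharpSS_apply, sharpAux_v, LinearMap.rTensor_tmul]; rfl

lemma sharpSS_u (a : Hss) :
    sharpSS k1 k2 k3 k4 l1 l2 l3 l4 a H4.u = a ⊗ₜ H4.u := by
  rw [sharpSS_apply, sharpAux_u, LinearMap.rTensor_tmul]
  simp

/-- `1♯ν = k₁(1♯1) + k₂(e₁♯1) + k₃(e₂♯1) - k₄(e₃♯1)`; more generally
every `a♯ν` is of the form `b♯1`. -/
theorem sharpSS_one_v :
    (sharpSS k1 k2 k3 k4 l1 l2 l3 l4) 1 H4.v =
      k1 • (sharpSS k1 k2 k3 k4 l1 l2 l3 l4) 1 H4.u + k2 • (sharpSS k1 k2 k3 k4 l1 l2 l3 l4) Hss.e1 H4.u + k3 • (sharpSS k1 k2 k3 k4 l1 l2 l3 l4) Hss.e2 H4.u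
        - k4 • (sharpSS k1 k2 k3 k4 l1 l2 l3 l4) Hss.e3 H4.u ∧
    ∀ a : Hss, ∃ b : Hss, (sharpSS k1 k2 k3 k4 l1 l2 l3 l4) a H4.v = (sharpSS k1 k2 k3 k4 l1 l2 l3 l4) b H4.u := by
  constructor
  · simp only [sharpSS_v, sharpSS_u, one_mul, nu1, TensorProduct.smul_tmul']
    rw [← TensorProduct.add_tmul, ← TensorProduct.add_tmul, ← TensorProduct.sub_tmul]
  · intro a
    exact ⟨a * nu1 k1 k2 k3 k4, by rw [sharpSS_v, sharpSS_u]⟩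
end
end

section
/- Let H4 act on the split quaternion algebra H_s by: 1 acts as identity, g·x = 0, v·1 = e3, v·e1 = e2, v·e2 = e1, v·e3 = 1, gv·1 = l1 - l2e1 + l3e2 + l4e3, gv·e1 = l2 + l1e1 - l4e2 + l3e3, gv·e2 = l3 - l4e1 + l1e2 + l2e3, gv·e3 = l4 + l3e1 - l2e2 + l1e3. Then for all a, b in H_s and h in H4, h·(ab) = (h1·a)(h2·b). -/
open Quaternion TensorProduct

noncomputable section

/-- The split quaternion algebra `H_s`:
`e1² = -1`, `e2² = 1`, `e3² = 1`, `e1e2 = e3 = -e2e1`,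
`e2e3 = -e1 = -e3e2`, `e3e1 = e2 = -e1e3`. -/
abbrev Hs := ℍ[ℝ, -1, 1]

namespace Hs
def e1 : Hs := ⟨0, 1, 0, 0⟩
def e2 : Hs := ⟨0, 0, 1, 0⟩
def e3 : Hs := ⟨0, 0, 0, 1⟩
/-- The basis `1, e1, e2, e3` of the split quaternion algebra. -/
def Qb : Module.Basis (Fin 4) ℝ Hs := QuaternionAlgebra.basisOneIJK (-1) 0 1
end Hs

variable (l1 l2 l3 l4 : ℝ)

/-- The value `gν · 1 = ω(1,gν) = ω(gν,1) = l₁ - l₂e₁ + l₃e₂ + l₄e₃`. -/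
def gnu1s : Hs := l1 • 1 - l2 • Hs.e1 + l3 • Hs.e2 + l4 • Hs.e3

/-- The value `ω(ν,gν) = ω(gν,ν) = l₄ + l₃e₁ - l₂e₂ + l₁e₃`. -/
def omvws : Hs := l4 • 1 + l3 • Hs.e1 - l2 • Hs.e2 + l1 • Hs.e3

/-- The partial action `· : H₄ ⊗ H_s → H_s` from the paper:
`1` acts as the identity, `g·x = 0`, `ν·1 = e₃`, `ν·e₁ = e₂`, `ν·e₂ = e₁`,
`ν·e₃ = 1`, and `gν` acts via the parameters `l₁,…,l₄`. -/
def actS : H4 →ₗ[ℝ] Hs →ₗ[ℝ] Hs :=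
  H4.B.constr ℝ
    ![LinearMap.id, 0,
      Hs.Qb.constr ℝ ![Hs.e3, Hs.e2, Hs.e1, 1],
      Hs.Qb.constr ℝ
        ![gnu1s l1 l2 l3 l4,
          l2 • 1 + l1 • Hs.e1 - l4 • Hs.e2 + l3 • Hs.e3,
          l3 • 1 - l4 • Hs.e1 + l1 • Hs.e2 + l2 • Hs.e3,
          omvws l1 l2 l3 l4]]

/-- The cocycle `ω : H₄ ⊗ H₄ → H_s` from the paper's table. -/
def omS : H4 →ₗ[ℝ] H4 →ₗ[ℝ] Hs :=
  H4.B.constr ℝ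
    ![H4.B.constr ℝ ![1, 0, Hs.e3, gnu1s l1 l2 l3 l4],
      0,
      H4.B.constr ℝ ![Hs.e3, 0, 1, omvws l1 l2 l3 l4],
      H4.B.constr ℝ ![gnu1s l1 l2 l3 l4, 0, omvws l1 l2 l3 l4, 0]]


lemma constrQ (f : Fin 4 → Hs) (x : Hs) :
    (Hs.Qb.constr ℝ f) x = x.re • f 0 + x.imI • f 1 + x.imJ • f 2 + x.imK • f 3 := by
  rw [Module.Basis.constr_apply_fintype, Fin.sum_univ_four]
  simp [Hs.Qb, Module.Basis.equivFun_apply]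

lemma actS_u : actS l1 l2 l3 l4 H4.u = LinearMap.id := by
  rw [H4.u, actS, Module.Basis.constr_basis]; rfl

lemma actS_g : actS l1 l2 l3 l4 H4.g = 0 := by
  rw [H4.g, actS, Module.Basis.constr_basis]; rfl

lemma actS_v_apply (x : Hs) : actS l1 l2 l3 l4 H4.v x = ⟨x.imK, x.imJ, x.imI, x.re⟩ := by
  rw [H4.v, actS, Module.Basis.constr_basis]
  show (Hs.Qb.constr ℝ ![Hs.e3, Hs.e2, Hs.e1, 1]) x = _
  rw [constrQ]
  ext <;> simp [Hs.e1, Hs.e2, Hs.e3]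

lemma actS_w_apply (x : Hs) : actS l1 l2 l3 l4 H4.w x =
    ⟨l1*x.re + l2*x.imI + l3*x.imJ + l4*x.imK,
     -(l2*x.re) + l1*x.imI - l4*x.imJ + l3*x.imK,
     l3*x.re - l4*x.imI + l1*x.imJ - l2*x.imK,
     l4*x.re + l3*x.imI + l2*x.imJ + l1*x.imK⟩ := by
  rw [H4.w, actS, Module.Basis.constr_basis]
  show (Hs.Qb.constr ℝ _) x = _
  rw [constrQ]
  ext <;> simp [Hs.e1, Hs.e2, Hs.e3, gnu1s, omvws] <;> ring

lemma actS_v_mul (a b : Hs) :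
    actS l1 l2 l3 l4 H4.v (a * b) = (actS l1 l2 l3 l4 H4.v a) * b := by
  rw [actS_v_apply, actS_v_apply]
  ext <;> simp [QuaternionAlgebra.re_mul, QuaternionAlgebra.imI_mul,
    QuaternionAlgebra.imJ_mul, QuaternionAlgebra.imK_mul] <;> ring

lemma actS_w_mul (a b : Hs) :
    actS l1 l2 l3 l4 H4.w (a * b) = a * (actS l1 l2 l3 l4 H4.w b) := by
  rw [actS_w_apply, actS_w_apply]
  ext <;> simp [QuaternionAlgebra.re_mul, QuaternionAlgebra.imI_mul,
    QuaternionAlgebra.imJ_mul, QuaternionAlgebra.imK_mul] <;> ring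

lemma Δ_u : H4.Δ H4.u = H4.u ⊗ₜ H4.u := by rw [H4.u, H4.Δ, Module.Basis.constr_basis]; rfl
lemma Δ_g : H4.Δ H4.g = H4.g ⊗ₜ H4.g := by rw [H4.g, H4.Δ, Module.Basis.constr_basis]; rfl
lemma Δ_v : H4.Δ H4.v = H4.g ⊗ₜ H4.v + H4.v ⊗ₜ H4.u := by
  rw [H4.v, H4.Δ, Module.Basis.constr_basis]; rfl
lemma Δ_w : H4.Δ H4.w = H4.u ⊗ₜ H4.w + H4.w ⊗ₜ H4.g := by
  rw [H4.w, H4.Δ, Module.Basis.constr_basis]; rfl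

/-- For the partial action of `H₄` on the split quaternion algebra
`H_s`, one has `h·(ab) = (h₁·a)(h₂·b)` for all `a, b ∈ H_s` and `h ∈ H₄`. -/
theorem actS_mul_compat (a b : Hs) (h : H4) :
    (actS l1 l2 l3 l4) h (a * b) =
      (LinearMap.mul' ℝ Hs ∘ₗ
        TensorProduct.map ((actS l1 l2 l3 l4).flip a) ((actS l1 l2 l3 l4).flip b)) (H4.Δ h) := by

  have hd : h = h 0 • H4.u + h 1 • H4.g + h 2 • H4.v + h 3 • H4.w := by
    funext i; fin_cases i <;> simp [H4.u, H4.g, H4.v, H4.w, H4.B]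
  rw [hd]
  simp only [map_add, map_smul, LinearMap.add_apply, LinearMap.smul_apply,
    LinearMap.coe_comp, Function.comp_apply, Δ_u, Δ_g, Δ_v, Δ_w,
    TensorProduct.map_tmul, LinearMap.mul'_apply, LinearMap.flip_apply,
    actS_u, actS_g, LinearMap.id_apply, LinearMap.zero_apply, zero_mul, mul_zero,
    add_zero, zero_add, actS_v_mul, actS_w_mul]
end
end
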